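/- Let F be a finite subset of the closed unit ball of ℝⁿ with circumradius 1 such that every proper subset of F has circumradius strictly less than 1. Then the linear span of F has dimension card F − 1, every point of F has norm 1, and the origin lies in the relative interior of the convex hull of F. -/

import Mathlib

set_option maxHeartbeats 1000000

open scoped RealInnerProductSpace

/-- The circumradius of a set: the infimum of radii of closed balls containing it. -/
noncomputable def circumradius {n : ℕ} (A : Set (EuclideanSpace ℝ (Fin n))) : ℝ :=
  sInf {r : ℝ | ∃ c : EuclideanSpace ℝ (Fin n), A ⊆ Metric.closedBall c r}

theorem minimal_circumradius_one_subset (n : ℕ)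
    (F : Finset (EuclideanSpace ℝ (Fin n)))
    (hball : ∀ p ∈ F, ‖p‖ ≤ 1)
    (hr : circumradius (F : Set (EuclideanSpace ℝ (Fin n))) = 1)
    (hmin : ∀ F' : Finset (EuclideanSpace ℝ (Fin n)), F' ⊂ F →
      circumradius (F' : Set (EuclideanSpace ℝ (Fin n))) < 1) :
    Module.finrank ℝ (Submodule.span ℝ (F : Set (EuclideanSpace ℝ (Fin n)))) = F.card - 1 ∧
    (∀ p ∈ F, ‖p‖ = 1) ∧
    (0 : EuclideanSpace ℝ (Fin n)) ∈ intrinsicInterior ℝ (convexHull ℝ (F : Set (EuclideanSpace ℝ (Fin n)))) := by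
  classical
  simp only [circumradius] at hr hmin
  -- basic facts about the circumradius set
  have hF0 : (F : Set (EuclideanSpace ℝ (Fin n))) ⊆ Metric.closedBall 0 1 := by
    intro p hp
    simpa using hball p hp
  have hbdd : BddBelow {r : ℝ | ∃ c : (EuclideanSpace ℝ (Fin n)), (F : Set (EuclideanSpace ℝ (Fin n))) ⊆ Metric.closedBall c r} := by
    by_contra h
    rw [csInf_of_not_bddBelow h, Real.sInf_empty] at hr
    norm_num at hr
  have key1 : ∀ (c : (EuclideanSpace ℝ (Fin n))) (r : ℝ), (F : Set (EuclideanSpace ℝ (Fin n))) ⊆ Metric.closedBall c r → 1 ≤ r := by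
    intro c r h
    have h2 : sInf {r : ℝ | ∃ c : EuclideanSpace ℝ (Fin n), (F : Set (EuclideanSpace ℝ (Fin n))) ⊆ Metric.closedBall c r} ≤ r := csInf_le hbdd ⟨c, h⟩
    linarith [hr ▸ h2]
  have key2 : ∀ F' : Finset (EuclideanSpace ℝ (Fin n)), F' ⊂ F → ∃ r < 1, ∃ c : (EuclideanSpace ℝ (Fin n)), (F' : Set (EuclideanSpace ℝ (Fin n))) ⊆ Metric.closedBall c r := by
    intro F' hss
    have hne : ({r : ℝ | ∃ c : (EuclideanSpace ℝ (Fin n)), (F' : Set (EuclideanSpace ℝ (Fin n))) ⊆ Metric.closedBall c r}).Nonempty :=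
      ⟨1, 0, fun p hp => hF0 (Finset.coe_subset.2 hss.subset hp)⟩
    obtain ⟨r, hrmem, hrlt⟩ := exists_lt_of_csInf_lt hne (hmin F' hss)
    obtain ⟨c, hc⟩ := hrmem
    exact ⟨r, hrlt, c, hc⟩
  have hFne : F.Nonempty := by
    rcases F.eq_empty_or_nonempty with rfl | h
    · exfalso
      obtain ⟨b, hb⟩ := hbdd
      have h1 : (b - 1) ∈ {r : ℝ | ∃ c : (EuclideanSpace ℝ (Fin n)), ((∅ : Finset (EuclideanSpace ℝ (Fin n))) : Set (EuclideanSpace ℝ (Fin n))) ⊆ Metric.closedBall c r} := by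
        exact ⟨0, by simp⟩
      have := hb h1
      linarith
    · exact h
  -- Step A: all norms are 1
  have hnorm : ∀ p ∈ F, ‖p‖ = 1 := by
    intro p hp
    by_contra hne
    have hlt : ‖p‖ < 1 := lt_of_le_of_ne (hball p hp) hne
    obtain ⟨r, hr1, c, hc⟩ := key2 (F.erase p) (Finset.erase_ssubset hp)
    set r' : ℝ := max r 0 with hr'def
    have hr'1 : r' < 1 := max_lt hr1 one_pos
    have hr'0 : (0:ℝ) ≤ r' := le_max_right _ _
    have hc' : ((F.erase p : Finset (EuclideanSpace ℝ (Fin n))) : Set (EuclideanSpace ℝ (Fin n))) ⊆ Metric.closedBall c r' :=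
      hc.trans (Metric.closedBall_subset_closedBall (le_max_left _ _))
    set t : ℝ := min (1/2) ((1 - ‖p‖) / (2 * (‖c‖ + 1))) with htdef
    have hc0 : (0:ℝ) < ‖c‖ + 1 := by positivity
    have ht0 : 0 < t := lt_min (by norm_num) (div_pos (by linarith) (by positivity))
    have ht1 : t < 1 := lt_of_le_of_lt (min_le_left _ _) (by norm_num)
    have htc : ‖p‖ + t * ‖c‖ < 1 := by
      have h1 : t ≤ (1 - ‖p‖) / (2 * (‖c‖ + 1)) := min_le_right _ _
      have h2 : t * (2 * (‖c‖ + 1)) ≤ 1 - ‖p‖ := by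
        rw [← le_div_iff₀ (by positivity)]
        exact h1
      nlinarith [norm_nonneg c, ht0]
    set R : ℝ := max (1 - t * (1 - r')) (‖p‖ + t * ‖c‖) with hRdef
    have hR1 : R < 1 := max_lt (by nlinarith) htc
    have hsub : (F : Set (EuclideanSpace ℝ (Fin n))) ⊆ Metric.closedBall (t • c) R := by
      intro q hq
      rw [Metric.mem_closedBall, dist_eq_norm]
      rcases eq_or_ne q p with rfl | hqp
      · calc ‖q - t • c‖ ≤ ‖q‖ + ‖t • c‖ := norm_sub_le _ _
          _ = ‖q‖ + t * ‖c‖ := by rw [norm_smul, Real.norm_eq_abs, abs_of_pos ht0]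
          _ ≤ R := le_max_right _ _
      · have hq' : q ∈ Metric.closedBall c r' := by
          apply hc'
          simp only [Finset.coe_erase, Set.mem_diff, Set.mem_singleton_iff]
          exact ⟨hq, hqp⟩
        have hqc : ‖q - c‖ ≤ r' := by rwa [Metric.mem_closedBall, dist_eq_norm] at hq'
        have hqn : ‖q‖ ≤ 1 := hball q hq
        calc ‖q - t • c‖ = ‖(1 - t) • q + t • (q - c)‖ := by
              congr 1; module
          _ ≤ ‖(1 - t) • q‖ + ‖t • (q - c)‖ := norm_add_le _ _
          _ = (1 - t) * ‖q‖ + t * ‖q - c‖ := by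
              rw [norm_smul, norm_smul, Real.norm_eq_abs, Real.norm_eq_abs,
                abs_of_pos (by linarith : (0:ℝ) < 1 - t), abs_of_pos ht0]
          _ ≤ (1 - t) * 1 + t * r' := by
              gcongr <;> linarith
          _ = 1 - t * (1 - r') := by ring
          _ ≤ R := le_max_left _ _
    exact absurd (key1 _ _ hsub) (not_le.2 hR1)
  -- Step B: 0 ∈ convexHull F
  have hconv : (0 : (EuclideanSpace ℝ (Fin n))) ∈ convexHull ℝ (F : Set (EuclideanSpace ℝ (Fin n))) := by
    by_contra h0
    obtain ⟨f, u, hfu, hub⟩ := geometric_hahn_banach_point_closed (convex_convexHull ℝ _)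
      (F.finite_toSet.isCompact_convexHull (𝕜 := ℝ)).isClosed h0
    have hu0 : 0 < u := by simpa using hfu
    set v : (EuclideanSpace ℝ (Fin n)) := (InnerProductSpace.toDual ℝ (EuclideanSpace ℝ (Fin n))).symm f with hvdef
    have hv : ∀ q ∈ F, u < ⟪v, q⟫ := by
      intro q hq
      have : ⟪v, q⟫ = f q := InnerProductSpace.toDual_symm_apply
      rw [this]
      exact hub q (subset_convexHull ℝ _ hq)
    set t : ℝ := u / (‖v‖ ^ 2 + 1) with htdef
    have ht0 : 0 < t := div_pos hu0 (by positivity)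
    have htv : t * ‖v‖ ^ 2 ≤ u := by
      rw [htdef, div_mul_eq_mul_div, div_le_iff₀ (by positivity)]
      nlinarith [sq_nonneg ‖v‖, hu0]
    have hkey : ∀ q ∈ F, ‖q - t • v‖ ^ 2 ≤ 1 - t * u := by
      intro q hq
      have h1 : ‖q - t • v‖ ^ 2 = ‖q‖ ^ 2 - 2 * (t * ⟪q, v⟫) + t ^ 2 * ‖v‖ ^ 2 := by
        rw [norm_sub_sq_real, real_inner_smul_right, norm_smul, Real.norm_eq_abs,
          abs_of_pos ht0, mul_pow]
      have h2 : ⟪q, v⟫ = ⟪v, q⟫ := real_inner_comm _ _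
      have h3 : u < ⟪v, q⟫ := hv q hq
      have h4 : ‖q‖ ≤ 1 := hball q hq
      have h5 : ‖q‖ ^ 2 ≤ 1 := by nlinarith [norm_nonneg q]
      have h6 : t ^ 2 * ‖v‖ ^ 2 ≤ t * u := by
        have : t ^ 2 * ‖v‖ ^ 2 = t * (t * ‖v‖ ^ 2) := by ring
        rw [this]
        exact mul_le_mul_of_nonneg_left htv ht0.le
      nlinarith
    obtain ⟨q0, hq0⟩ := hFne
    have h1tu : 0 ≤ 1 - t * u := le_trans (sq_nonneg _) (hkey q0 hq0)
    have htu0 : 0 < t * u := mul_pos ht0 hu0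
    set R : ℝ := Real.sqrt (1 - t * u) with hRdef
    have hR1 : R < 1 := by
      have h2 : R < Real.sqrt 1 := Real.sqrt_lt_sqrt h1tu (by linarith)
      simpa using h2
    have hsub : (F : Set (EuclideanSpace ℝ (Fin n))) ⊆ Metric.closedBall (t • v) R := by
      intro q hq
      rw [Metric.mem_closedBall, dist_eq_norm]
      rw [hRdef, show ‖q - t • v‖ = Real.sqrt (‖q - t • v‖ ^ 2) by
        rw [Real.sqrt_sq (norm_nonneg _)]]
      exact Real.sqrt_le_sqrt (hkey q hq)
    exact absurd (key1 _ _ hsub) (not_le.2 hR1)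
  -- Step C: 0 not in convex hull of any proper subset
  have hC : ∀ F' : Finset (EuclideanSpace ℝ (Fin n)), F' ⊂ F → (0 : (EuclideanSpace ℝ (Fin n))) ∉ convexHull ℝ (F' : Set (EuclideanSpace ℝ (Fin n))) := by
    intro F' hss h0
    obtain ⟨r, hr1, c, hc⟩ := key2 F' hss
    have hF'ne : (F' : Set (EuclideanSpace ℝ (Fin n))).Nonempty := by
      rcases F'.eq_empty_or_nonempty with rfl | h
      · simp at h0
      · exact Finset.coe_nonempty.2 h
    obtain ⟨q0, hq0⟩ := hF'ne
    have hr0 : (0:ℝ) ≤ r := le_trans dist_nonneg (hc hq0)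
    set δ : ℝ := (1 - r ^ 2) / 2 with hδdef
    have hδ : 0 < δ := by rw [hδdef]; nlinarith
    have hhalf : (F' : Set (EuclideanSpace ℝ (Fin n))) ⊆ {x : (EuclideanSpace ℝ (Fin n)) | δ ≤ ⟪x, c⟫} := by
      intro q hq
      have h1 : ‖q - c‖ ≤ r := by
        have := hc hq
        rwa [Metric.mem_closedBall, dist_eq_norm] at this
      have h2 : ‖q - c‖ ^ 2 ≤ r ^ 2 := by nlinarith [norm_nonneg (q - c)]
      have h3 : ‖q‖ = 1 := hnorm q (hss.subset (by exact_mod_cast hq))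
      rw [norm_sub_sq_real, h3] at h2
      simp only [Set.mem_setOf_eq, hδdef]
      nlinarith [sq_nonneg ‖c‖]
    have hlin : IsLinearMap ℝ (fun x : (EuclideanSpace ℝ (Fin n)) => ⟪x, c⟫) :=
      ⟨fun x y => inner_add_left x y c, fun r x => real_inner_smul_left x c r⟩
    have := convexHull_min hhalf (convex_halfSpace_ge hlin δ) h0
    simp only [Set.mem_setOf_eq, inner_zero_left] at this
    linarith
  -- Step D: Caratheodory
  obtain ⟨ι, hfin, z, w, hzF, hzind, hw0, hw1, hwz⟩ := eq_pos_convex_span_of_mem_convexHull hconv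
  have hzinj : Function.Injective z := hzind.injective
  set tF : Finset (EuclideanSpace ℝ (Fin n)) := Finset.univ.image z with htFdef
  have htF : tF ⊆ F := by
    intro x hx
    rw [htFdef, Finset.mem_image] at hx
    obtain ⟨i, _, rfl⟩ := hx
    exact_mod_cast hzF ⟨i, rfl⟩
  have hcoetF : (tF : Set (EuclideanSpace ℝ (Fin n))) = Set.range z := by
    rw [htFdef, Finset.coe_image, Finset.coe_univ, Set.image_univ]
  have h0range : (0 : (EuclideanSpace ℝ (Fin n))) ∈ convexHull ℝ (Set.range z) := by
    rw [← hwz]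
    exact (convex_convexHull ℝ _).sum_mem (fun i _ => (hw0 i).le) hw1
      (fun i _ => subset_convexHull ℝ _ ⟨i, rfl⟩)
  have htFeq : tF = F := by
    by_contra hne
    exact hC tF (lt_of_le_of_ne htF hne) (by rwa [hcoetF])
  have hrange : Set.range z = (F : Set (EuclideanSpace ℝ (Fin n))) := by rw [← htFeq, hcoetF]
  have hcard : Fintype.card ι = F.card := by
    rw [← htFeq, htFdef, Finset.card_image_of_injective _ hzinj, Finset.card_univ]
  -- 0 in affine span
  have h0aff : (0 : (EuclideanSpace ℝ (Fin n))) ∈ affineSpan ℝ (F : Set (EuclideanSpace ℝ (Fin n))) := convexHull_subset_affineSpan _ hconv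
  -- span = vectorSpan
  have hspan : Submodule.span ℝ (F : Set (EuclideanSpace ℝ (Fin n))) = vectorSpan ℝ (F : Set (EuclideanSpace ℝ (Fin n))) := by
    apply le_antisymm
    · rw [Submodule.span_le]
      intro q hq
      have h1 : q ∈ affineSpan ℝ (F : Set (EuclideanSpace ℝ (Fin n))) := subset_affineSpan ℝ _ hq
      have h2 := AffineSubspace.vsub_mem_direction h1 h0aff
      rw [direction_affineSpan] at h2
      simpa using h2
    · rw [vectorSpan, Submodule.span_le]
      rintro x hx
      rw [Set.mem_vsub] at hx
      obtain ⟨a, ha, b, hb, rfl⟩ := hx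
      exact Submodule.sub_mem _ (Submodule.subset_span ha) (Submodule.subset_span hb)
  have hcard1 : Fintype.card ι = (F.card - 1) + 1 := by
    rw [hcard, Nat.sub_add_cancel (Finset.card_pos.2 hFne)]
  have hrank := hzind.finrank_vectorSpan hcard1
  rw [hrange] at hrank
  refine ⟨by rw [hspan]; exact hrank, hnorm, ?_⟩
  -- Step F: intrinsic interior
  set V : Submodule ℝ (EuclideanSpace ℝ (Fin n)) := Submodule.span ℝ (F : Set (EuclideanSpace ℝ (Fin n))) with hVdef
  set φ : V →ᵃⁱ[ℝ] (EuclideanSpace ℝ (Fin n)) := V.subtypeₗᵢ.toAffineIsometry with hφdef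
  have hzV : ∀ i, z i ∈ V := fun i => Submodule.subset_span (hrange ▸ ⟨i, rfl⟩)
  set p : ι → V := fun i => ⟨z i, hzV i⟩ with hpdef
  have hφp : (⇑φ.toAffineMap) ∘ p = z := by funext i; rfl
  have hpind : AffineIndependent ℝ p :=
    AffineIndependent.of_comp φ.toAffineMap (hφp ▸ hzind)
  have hιne : Nonempty ι := by
    obtain ⟨q0, hq0⟩ := hFne
    obtain ⟨i, -⟩ := hrange ▸ (show (q0 : EuclideanSpace ℝ (Fin n)) ∈ (F : Set (EuclideanSpace ℝ (Fin n))) from hq0)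
    exact ⟨i⟩
  have hsum : ∑ i, w i • p i = (0 : V) := by
    apply V.injective_subtype
    rw [map_sum]
    simp only [map_smul, Submodule.coe_subtype, map_zero]
    convert hwz using 2
  have h0convp : (0 : V) ∈ convexHull ℝ (Set.range p) := by
    rw [← hsum]
    exact (convex_convexHull ℝ _).sum_mem (fun i _ => (hw0 i).le) hw1
      (fun i _ => subset_convexHull ℝ _ ⟨i, rfl⟩)
  have h0affp : (0 : V) ∈ affineSpan ℝ (Set.range p) :=
    convexHull_subset_affineSpan _ h0convp
  have himgp : ⇑V.subtype '' Set.range p = Set.range z := by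
    ext x
    simp only [Set.mem_image, Set.mem_range]
    constructor
    · rintro ⟨y, ⟨i, rfl⟩, rfl⟩; exact ⟨i, rfl⟩
    · rintro ⟨i, rfl⟩; exact ⟨p i, ⟨i, rfl⟩, rfl⟩
  have hsub_span : Submodule.span ℝ (Set.range p) = ⊤ := by
    apply Submodule.map_injective_of_injective V.injective_subtype
    rw [Submodule.map_span, Submodule.map_top, Submodule.range_subtype, himgp, hrange]
  have hvtop : vectorSpan ℝ (Set.range p) = ⊤ := by
    rw [eq_top_iff, ← hsub_span, Submodule.span_le]
    intro x hx
    have h1 : x ∈ affineSpan ℝ (Set.range p) := subset_affineSpan ℝ _ hx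
    have h2 := AffineSubspace.vsub_mem_direction h1 h0affp
    rw [direction_affineSpan] at h2
    simpa using h2
  have hrpne : (Set.range p).Nonempty := Set.range_nonempty p
  have htot : affineSpan ℝ (Set.range p) = ⊤ :=
    (AffineSubspace.affineSpan_eq_top_iff_vectorSpan_eq_top_of_nonempty ℝ V V hrpne).2 hvtop
  let b : AffineBasis ι ℝ V := ⟨p, hpind, htot⟩
  have hbc : ⇑b = p := rfl
  have hcomb : Finset.univ.affineCombination ℝ p w = (0 : V) := by
    rw [Finset.affineCombination_eq_linear_combination _ _ _ hw1]
    exact hsum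
  have hcoord : ∀ i, 0 < b.coord i 0 := by
    intro i
    have h1 := b.coord_apply_combination_of_mem (Finset.mem_univ i) (w := w) hw1
    rw [hbc, hcomb] at h1
    rw [h1]
    exact hw0 i
  have h0int : (0 : V) ∈ interior (convexHull ℝ (Set.range ⇑b)) := by
    rw [b.interior_convexHull]
    exact hcoord
  have h0intr : (0 : V) ∈ intrinsicInterior ℝ (convexHull ℝ (Set.range p)) := by
    rw [← hbc]
    exact interior_subset_intrinsicInterior h0int
  have himg : ⇑φ '' convexHull ℝ (Set.range p) = convexHull ℝ (F : Set (EuclideanSpace ℝ (Fin n))) := by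
    have h1 : ⇑φ.toAffineMap '' convexHull ℝ (Set.range p) = convexHull ℝ (⇑φ.toAffineMap '' Set.range p) :=
      φ.toAffineMap.image_convexHull (Set.range p)
    rw [show ⇑φ = ⇑φ.toAffineMap from rfl, h1]
    congr 1
    rw [show ⇑φ.toAffineMap '' Set.range p = ⇑V.subtype '' Set.range p from rfl, himgp, hrange]
  rw [← himg, AffineIsometry.image_intrinsicInterior]
  exact ⟨0, h0intr, rfl⟩
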